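/- For every integer n ≥ 3, in the presented group G_n = ⟨R₁, ..., R_{n-1} | braid relations, far commutation, R₁² = R₂ R₁² R₂⟩, the relation R_i² = R_{i+1} R_i² R_{i+1} holds for every i with 1 ≤ i ≤ n-2, and also the symmetric relation R_{i+1}² = R_i R_{i+1}² R_i holds for every such i. -/

import Mathlib

/-- The relators of the presentation
`⟨R₁, …, R_{n-1} | RᵢRᵢ₊₁Rᵢ = Rᵢ₊₁RᵢRᵢ₊₁ (1 ≤ i ≤ n-2); RᵢRⱼ = RⱼRᵢ (|i-j| ≥ 2);
R₁² = R₂R₁²R₂⟩`, as elements of the free group on `n - 1` generators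
(indexed by `Fin (n-1)`, the generator `Rᵢ` being `FreeGroup.of ⟨i-1, _⟩`). -/
def spinOctRels (n : ℕ) : Set (FreeGroup (Fin (n - 1))) :=
  { r | (∃ i j : Fin (n - 1), (j : ℕ) = (i : ℕ) + 1 ∧
          r = (FreeGroup.of i * FreeGroup.of j * FreeGroup.of i) *
              (FreeGroup.of j * FreeGroup.of i * FreeGroup.of j)⁻¹) ∨
        (∃ i j : Fin (n - 1), (i : ℕ) + 2 ≤ (j : ℕ) ∧
          r = (FreeGroup.of i * FreeGroup.of j) * (FreeGroup.of j * FreeGroup.of i)⁻¹) ∨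
        (∃ i j : Fin (n - 1), (i : ℕ) = 0 ∧ (j : ℕ) = 1 ∧
          r = (FreeGroup.of i) ^ 2 *
              (FreeGroup.of j * (FreeGroup.of i) ^ 2 * FreeGroup.of j)⁻¹) }

section GroupLemmas

variable {G : Type*} [Group G]

/-- Symmetry: from the braid relation `aba = bab` and `a² = ba²b`, deduce `b² = ab²a`,
by conjugating with the half twist `aba`. -/
theorem spinOct_sym (a b : G) (h1 : a * b * a = b * a * b)
    (ha : a ^ 2 = b * a ^ 2 * b) : b ^ 2 = a * b ^ 2 * a := by
  have h1x : ∀ x : G, a * (b * (a * x)) = b * (a * (b * x)) := fun x => by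
    rw [← mul_assoc, ← mul_assoc, h1, mul_assoc, mul_assoc]
  -- conjugation by v = a*b*a :  v*(a*x) = b*(v*x),  v*(b*x) = a*(v*x)
  have hVa : ∀ x : G, a * (b * (a * (a * x))) = b * (a * (b * (a * x))) :=
    fun x => h1x (a * x)
  have hVb : ∀ x : G, a * (b * (a * (b * x))) = a * (a * (b * (a * x))) :=
    fun x => congrArg (a * ·) (h1x x).symm
  have ha' : a * (a * 1) = b * (a * (a * (b * 1))) := by
    simpa only [pow_two, mul_assoc, mul_one] using ha
  -- compute b*b*v in two ways, where v = a*(b*(a*1))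
  have l1 : a * (b * (a * (a * (a * 1)))) = b * (b * (a * (b * (a * 1)))) := by
    rw [hVa, hVa]
  have l2 : a * (b * (a * (b * (a * (a * (b * 1)))))) =
      a * (b * (b * (a * (a * (b * (a * 1)))))) := by
    rw [hVb, hVa, hVa, hVb]
  have key : (b * b) * (a * (b * (a * 1))) =
      (a * (b * (b * a))) * (a * (b * (a * 1))) := by
    simp only [mul_assoc]
    calc b * (b * (a * (b * (a * 1))))
        = a * (b * (a * (a * (a * 1)))) := l1.symm
      _ = a * (b * (a * (b * (a * (a * (b * 1)))))) := by rw [ha']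
      _ = a * (b * (b * (a * (a * (b * (a * 1)))))) := l2
  have := mul_right_cancel key
  simpa only [pow_two, mul_assoc] using this

/-- Translation: from the braid relations on `a,b` and `b,c`, the commutation `ac = ca`,
and `b² = ab²a`, deduce `b² = cb²c`, by conjugating with the half twist `abcaba`. -/
theorem spinOct_shift (a b c : G) (h1 : a * b * a = b * a * b) (h2 : b * c * b = c * b * c)
    (h3 : a * c = c * a) (hb : b ^ 2 = a * b ^ 2 * a) : b ^ 2 = c * b ^ 2 * c := by
  have h1x : ∀ x : G, a * (b * (a * x)) = b * (a * (b * x)) := fun x => by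
    rw [← mul_assoc, ← mul_assoc, h1, mul_assoc, mul_assoc]
  have h2x : ∀ x : G, b * (c * (b * x)) = c * (b * (c * x)) := fun x => by
    rw [← mul_assoc, ← mul_assoc, h2, mul_assoc, mul_assoc]
  have h3x : ∀ x : G, a * (c * x) = c * (a * x) := fun x => by
    rw [← mul_assoc, h3, mul_assoc]
  -- conjugation by w = a*b*c*a*b*a : w*(a*x) = c*(w*x), w*(b*x) = b*(w*x)
  have hWa : ∀ x : G, a * (b * (c * (a * (b * (a * (a * x)))))) =
      c * (a * (b * (c * (a * (b * (a * x)))))) := fun x => by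
    rw [h1x, h2x, h3x]
  have hWb : ∀ x : G, a * (b * (c * (a * (b * (a * (b * x)))))) =
      b * (a * (b * (c * (a * (b * (a * x)))))) := fun x => by
    rw [← h1x, ← h3x, h1x]
  have hb' : b * (b * 1) = a * (b * (b * (a * 1))) := by
    simpa only [pow_two, mul_assoc, mul_one] using hb
  have l1 : a * (b * (c * (a * (b * (a * (b * (b * 1))))))) =
      b * (b * (a * (b * (c * (a * (b * (a * 1))))))) := by
    rw [hWb, hWb]
  have l2 : a * (b * (c * (a * (b * (a * (a * (b * (b * (a * 1))))))))) =
      c * (b * (b * (c * (a * (b * (c * (a * (b * (a * 1))))))))) := by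
    rw [hWa, hWb, hWb, hWa]
  have key : (b * b) * (a * (b * (c * (a * (b * (a * 1)))))) =
      (c * (b * (b * c))) * (a * (b * (c * (a * (b * (a * 1)))))) := by
    simp only [mul_assoc]
    calc b * (b * (a * (b * (c * (a * (b * (a * 1)))))))
        = a * (b * (c * (a * (b * (a * (b * (b * 1))))))) := l1.symm
      _ = a * (b * (c * (a * (b * (a * (a * (b * (b * (a * 1))))))))) := by rw [hb']
      _ = c * (b * (b * (c * (a * (b * (c * (a * (b * (a * 1))))))))) := l2
  have := mul_right_cancel key
  simpa only [pow_two, mul_assoc] using this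

end GroupLemmas

section Rels

variable {n : ℕ}

theorem spinOct_rel_one {r : FreeGroup (Fin (n - 1))} (h : r ∈ spinOctRels n) :
    PresentedGroup.mk (spinOctRels n) r = 1 :=
  (QuotientGroup.eq_one_iff r).2 (Subgroup.subset_normalClosure h)

theorem spinOct_braid (i j : Fin (n - 1)) (hij : (j : ℕ) = (i : ℕ) + 1) :
    (PresentedGroup.of (rels := spinOctRels n) i) * PresentedGroup.of j * PresentedGroup.of i =
      PresentedGroup.of j * PresentedGroup.of i * PresentedGroup.of j := by
  have h := spinOct_rel_one (n := n) (Or.inl ⟨i, j, hij, rfl⟩)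
  rw [map_mul, map_inv, mul_inv_eq_one] at h
  simpa only [map_mul, PresentedGroup.of] using h

theorem spinOct_comm (i j : Fin (n - 1)) (hij : (i : ℕ) + 2 ≤ (j : ℕ)) :
    (PresentedGroup.of (rels := spinOctRels n) i) * PresentedGroup.of j =
      PresentedGroup.of j * PresentedGroup.of i := by
  have h := spinOct_rel_one (n := n) (Or.inr (Or.inl ⟨i, j, hij, rfl⟩))
  rw [map_mul, map_inv, mul_inv_eq_one] at h
  simpa only [map_mul, PresentedGroup.of] using h

theorem spinOct_base (i j : Fin (n - 1)) (hi : (i : ℕ) = 0) (hj : (j : ℕ) = 1) :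
    (PresentedGroup.of (rels := spinOctRels n) i) ^ 2 =
      PresentedGroup.of j * (PresentedGroup.of i) ^ 2 * PresentedGroup.of j := by
  have h := spinOct_rel_one (n := n) (Or.inr (Or.inr ⟨i, j, hi, hj, rfl⟩))
  rw [map_mul, map_inv, mul_inv_eq_one] at h
  simpa only [map_mul, map_pow, PresentedGroup.of] using h

end Rels

theorem stmt_12 (n : ℕ) (hn : 3 ≤ n) (i j : Fin (n - 1)) (hij : (j : ℕ) = (i : ℕ) + 1) :
    (PresentedGroup.of (rels := spinOctRels n) i) ^ 2 =
      PresentedGroup.of j * (PresentedGroup.of i) ^ 2 * PresentedGroup.of j ∧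
    (PresentedGroup.of (rels := spinOctRels n) j) ^ 2 =
      PresentedGroup.of i * (PresentedGroup.of j) ^ 2 * PresentedGroup.of i := by
  have key : ∀ k : ℕ, ∀ i j : Fin (n - 1), (i : ℕ) = k → (j : ℕ) = (i : ℕ) + 1 →
      (PresentedGroup.of (rels := spinOctRels n) i) ^ 2 =
        PresentedGroup.of j * (PresentedGroup.of i) ^ 2 * PresentedGroup.of j := by
    intro k
    induction k with
    | zero =>
      intro i j hi hij
      exact spinOct_base i j hi (by omega)
    | succ k ih =>
      intro i j hi hij
      have hk : k < n - 1 := by omega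
      set a : Fin (n - 1) := ⟨k, hk⟩ with ha
      have hai : (i : ℕ) = (a : ℕ) + 1 := by simp [ha, hi]
      have h1 := spinOct_braid (n := n) a i hai
      have prev := ih a i rfl hai
      have hsym := spinOct_sym _ _ h1 prev
      exact spinOct_shift _ _ _ h1 (spinOct_braid i j hij)
        (spinOct_comm a j (by omega)) hsym
  have first := key (i : ℕ) i j rfl hij
  exact ⟨first, spinOct_sym _ _ (spinOct_braid i j hij) first⟩
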